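/- Let α > −1, K ≥ 1, and γ_0 = 1, γ_1,…,γ_K real with γ_K ≠ 0 and Σ_{j=0}^K γ_j ≠ 0. Then there exists n_0 (explicitly, n_0 = ⌊K + 1 + (|α|/(2^{1/K}−1)) max{1, (Σ_{j=0}^{K−1}|γ_j|)/|Σ_{j=0}^K γ_j|}⌋) such that for all n ≥ n_0, the sign of q_n(0) equals the sign of Σ_{j=0}^K γ_j, where q_n(x) = Σ_{j=0}^K γ_j L_{n−j}^α(x). -/

import Mathlib

open Polynomial Finset

/-- The standard (generalized) Laguerre polynomial `L_n^α`. -/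
noncomputable def laguerre (α : ℝ) (n : ℕ) : Polynomial ℝ :=
  ∑ k ∈ Finset.range (n + 1),
    Polynomial.C ((-1 : ℝ) ^ k * (ascPochhammer ℝ (n - k)).eval (α + k + 1) /
      ((n - k).factorial * k.factorial)) * Polynomial.X ^ k

/-- The monic Laguerre polynomial `L̂_n^α = (-1)^n n! L_n^α`. -/
noncomputable def monicLaguerre (α : ℝ) (n : ℕ) : Polynomial ℝ :=
  Polynomial.C ((-1 : ℝ) ^ n * n.factorial) * laguerre α n

/-- The Laguerre polynomial normalized to take the value 1 at 0:
`𝔏_n^α = (n!/(1+α)_n) L_n^α`. -/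
noncomputable def laguerreOne (α : ℝ) (n : ℕ) : Polynomial ℝ :=
  Polynomial.C ((n.factorial : ℝ) / (ascPochhammer ℝ n).eval (1 + α)) * laguerre α n

/-- The Brenke normalization `ℓ_n^α = L_n^α/(1+α)_n`. -/
noncomputable def laguerreBrenke (α : ℝ) (n : ℕ) : Polynomial ℝ :=
  Polynomial.C (1 / (ascPochhammer ℝ n).eval (1 + α)) * laguerre α n

lemma aux_convex (x t : ℝ) (hx : 0 ≤ x) (ht0 : 0 ≤ t) (ht1 : t ≤ 1) :
    ∀ K : ℕ, (1 + t*x)^K ≤ 1 + t*((1+x)^K - 1) := by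
  intro K
  induction K with
  | zero => simp
  | succ K ih =>
    have hA : (1:ℝ) ≤ (1+x)^K := one_le_pow₀ (by linarith)
    have h1 : (0:ℝ) ≤ 1 + t*x := by nlinarith
    calc (1 + t*x)^(K+1) = (1+t*x)^K * (1+t*x) := by ring
    _ ≤ (1 + t*((1+x)^K - 1)) * (1+t*x) := mul_le_mul_of_nonneg_right ih h1
    _ ≤ 1 + t*((1+x)^(K+1) - 1) := by
        have key : ((1:ℝ) + t*((1+x)^K - 1)) * (1+t*x) - (1 + t*((1+x)^(K+1) - 1))
            = t*(t-1)*x*((1+x)^K - 1) := by ring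
        nlinarith [mul_nonneg (mul_nonneg ht0 (by linarith : (0:ℝ) ≤ 1 - t)) hx]

lemma aux_chain (c : ℕ → ℝ) (ε : ℝ) (hε : 0 ≤ ε) (K : ℕ)
    (hrec : ∀ j < K, |c j - c (j+1)| ≤ ε * |c (j+1)|) :
    ∀ d j, j + d = K → |c j - c K| ≤ ((1+ε)^d - 1) * |c K| := by
  intro d
  induction d with
  | zero => intro j hj; subst hj; simp
  | succ d ih =>
    intro j hj
    have hjK : j < K := by omega
    have ih' := ih (j+1) (by omega)
    have h1 : |c (j+1)| ≤ (1+ε)^d * |c K| := by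
      have := abs_sub_abs_le_abs_sub (c (j+1)) (c K)
      nlinarith [abs_nonneg (c K)]
    have h2 := hrec j hjK
    have h3 : |c j - c K| ≤ |c j - c (j+1)| + |c (j+1) - c K| := abs_sub_le _ _ _
    have hp : ((1:ℝ)+ε)^(d+1) = (1+ε)^d * (1+ε) := by ring
    nlinarith [abs_nonneg (c K), pow_nonneg (by linarith : (0:ℝ) ≤ 1+ε) d]


lemma laguerre_eval_zero (α : ℝ) (n : ℕ) :
    (laguerre α n).eval 0 = (ascPochhammer ℝ n).eval (α + 1) / n.factorial := by
  unfold laguerre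
  rw [eval_finset_sum, Finset.sum_eq_single 0]
  · simp
  · intro k hk hk0; simp [zero_pow hk0]
  · intro h; simp at h


/-- Sign of `q_n(0)` where `q_n = Σ_{j=0}^K γ_j L_{n-j}^α`: for
`n ≥ n₀ = ⌊K + 1 + (|α|/(2^{1/K} - 1)) max{1, Σ_{j<K}|γ_j|/|Σ γ_j|}⌋`, the sign of
`q_n(0)` equals the sign of `Σ_{j=0}^K γ_j = P(1)`. -/
theorem stmt_15 (α : ℝ) (hα : -1 < α) (K : ℕ) (hK : 1 ≤ K) (γ : ℕ → ℝ)
    (hγ0 : γ 0 = 1) (hγK : γ K ≠ 0)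
    (hP1 : ∑ j ∈ Finset.range (K + 1), γ j ≠ 0) :
    ∀ n : ℕ,
      (⌊(K : ℝ) + 1 + (|α| / ((2 : ℝ) ^ ((1 : ℝ) / (K : ℝ)) - 1)) *
          max 1 ((∑ j ∈ Finset.range K, |γ j|) / |∑ j ∈ Finset.range (K + 1), γ j|)⌋
        ≤ (n : ℤ)) →
      Real.sign ((∑ j ∈ Finset.range (K + 1),
          Polynomial.C (γ j) * laguerre α (n - j)).eval 0)
        = Real.sign (∑ j ∈ Finset.range (K + 1), γ j) := by
  intro n hn
  set S := ∑ j ∈ Finset.range (K + 1), γ j with hSdef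
  set T := ∑ j ∈ Finset.range K, |γ j| with hTdef
  set δ := (2 : ℝ) ^ ((1 : ℝ) / (K : ℝ)) - 1 with hδdef
  set M := max 1 (T / |S|) with hMdef
  have hK0 : (0:ℝ) < K := by exact_mod_cast hK
  have hδ0 : 0 < δ := by
    rw [hδdef, sub_pos]
    exact (Real.one_lt_rpow_iff_of_pos (by norm_num)).mpr (Or.inl ⟨by norm_num, by positivity⟩)
  have hδ2 : (1 + δ)^K = 2 := by
    have h1 : (1:ℝ) + δ = (2:ℝ) ^ ((1:ℝ)/(K:ℝ)) := by simp [hδdef]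
    rw [h1, ← Real.rpow_natCast ((2:ℝ) ^ ((1:ℝ)/(K:ℝ))) K, ← Real.rpow_mul (by norm_num)]
    rw [one_div, inv_mul_cancel₀ (by positivity)]
    norm_num
  have hM1 : (1:ℝ) ≤ M := le_max_left _ _
  have hM0 : (0:ℝ) < M := by linarith
  have hS0 : (0:ℝ) < |S| := abs_pos.mpr hP1
  have hTM : T ≤ M * |S| := by
    have : T / |S| ≤ M := le_max_right _ _
    calc T = (T / |S|) * |S| := by field_simp
    _ ≤ M * |S| := mul_le_mul_of_nonneg_right this (le_of_lt hS0)
  have hT1 : (1:ℝ) ≤ T := by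
    have : |γ 0| ≤ T :=
      Finset.single_le_sum (fun i _ => abs_nonneg (γ i)) (Finset.mem_range.mpr hK)
    simpa [hγ0] using this
  -- n bounds
  have hfl := Int.sub_one_lt_floor ((K : ℝ) + 1 + (|α| / δ) * M)
  have hnR : (K:ℝ) + (|α| / δ) * M < n := by
    have : ((⌊(K : ℝ) + 1 + (|α| / δ) * M⌋ : ℤ) : ℝ) ≤ (n:ℝ) := by exact_mod_cast hn
    linarith
  have hnK : K + 1 ≤ n := by
    have h1 : (0:ℝ) ≤ (|α| / δ) * M := by positivity
    have : (K:ℝ) < (n:ℝ) := by linarith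
    exact_mod_cast Nat.succ_le_of_lt (by exact_mod_cast this)
  set D := (n:ℝ) - K + 1 with hDdef
  have hD1 : 1 + |α| * M / δ < D := by
    have : (|α|/δ) * M = |α| * M / δ := by ring
    simp only [hDdef]; linarith [hnR, this ▸ hnR]
  have hD0 : (0:ℝ) < D := by
    have h0 : (0:ℝ) ≤ |α| * M / δ := by positivity
    linarith
  set ε := |α| / D with hεdef
  have hε0 : 0 ≤ ε := by positivity
  have hεδ : ε < δ / M := by
    rcases eq_or_ne α 0 with h | h
    · rw [hεdef, h]; simp; positivity
    · have hα0 : 0 < |α| := abs_pos.mpr h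
      have hq : 0 < |α| * M / δ := by positivity
      have : |α| / D < |α| / (|α| * M / δ) :=
        div_lt_div_of_pos_left hα0 hq (by linarith)
      calc ε < |α| / (|α| * M / δ) := this
      _ = δ / M := by field_simp
  have key : (1 + ε)^K - 1 < 1 / M := by
    have h1 : (1 + ε)^K < (1 + δ/M)^K := by
      apply pow_lt_pow_left₀ (by linarith) (by linarith) (by omega)
    have h2 : (1 + δ/M)^K ≤ 1 + (1/M) * ((1+δ)^K - 1) := by
      have := aux_convex δ (1/M) (le_of_lt hδ0) (by positivity) (by
        rw [div_le_one hM0]; exact hM1) K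
      calc (1 + δ/M)^K = (1 + (1/M)*δ)^K := by ring_nf
      _ ≤ 1 + (1/M) * ((1+δ)^K - 1) := this
    rw [hδ2] at h2
    have h3 : (1:ℝ) + 1/M * (2 - 1) = 1 + 1/M := by ring
    rw [h3] at h2
    linarith
  set c : ℕ → ℝ := fun j => (ascPochhammer ℝ (n - j)).eval (α + 1) / (n - j).factorial
    with hcdef
  have hc_pos : ∀ j, 0 < c j := fun j =>
    div_pos (ascPochhammer_pos _ _ (by linarith)) (by exact_mod_cast (n - j).factorial_pos)
  have hrec : ∀ j < K, |c j - c (j+1)| ≤ ε * |c (j+1)| := by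
    intro j hj
    obtain ⟨m, hm⟩ : ∃ m, n - j = m + 1 := ⟨n - j - 1, by omega⟩
    have hm1 : n - (j+1) = m := by omega
    have hmpos : (0:ℝ) < (m:ℝ) + 1 := by positivity
    have hcj : c j = c (j+1) * ((α + 1 + m) / (m + 1)) := by
      simp only [hcdef, hm, hm1, ascPochhammer_succ_eval, Nat.factorial_succ]
      push_cast
      field_simp
      try ring
      try simp
    have hDm : D ≤ (m:ℝ) + 1 := by
      have h1 : n ≤ m + K := by omega
      have h2 : (n:ℝ) ≤ (m:ℝ) + (K:ℝ) := by exact_mod_cast h1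
      simp only [hDdef]; linarith
    have hsub : c j - c (j+1) = c (j+1) * (α / (m + 1)) := by
      rw [hcj]; field_simp; ring
    rw [hsub, abs_mul, mul_comm]
    apply mul_le_mul_of_nonneg_right _ (abs_nonneg _)
    rw [abs_div, abs_of_pos hmpos, hεdef]
    exact div_le_div_of_nonneg_left (abs_nonneg α) hD0 hDm
  have chain := aux_chain c ε hε0 K hrec
  have hcb : ∀ j ∈ Finset.range (K+1), |c j - c K| ≤ ((1+ε)^K - 1) * |c K| := by
    intro j hj
    have hjK : j ≤ K := by simpa [Nat.lt_succ_iff] using hj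
    refine (chain (K - j) j (by omega)).trans ?_
    apply mul_le_mul_of_nonneg_right _ (abs_nonneg _)
    have : (1+ε)^(K-j) ≤ (1+ε)^K := pow_le_pow_right₀ (by linarith) (Nat.sub_le K j)
    linarith
  have hq : (∑ j ∈ Finset.range (K + 1),
      Polynomial.C (γ j) * laguerre α (n - j)).eval 0
      = ∑ j ∈ Finset.range (K + 1), γ j * c j := by
    rw [eval_finset_sum]
    refine Finset.sum_congr rfl fun j _ => ?_
    simp [laguerre_eval_zero, hcdef]
  set q0 := ∑ j ∈ Finset.range (K + 1), γ j * c j with hq0def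
  have herr : |q0 - S * c K| ≤ ((1+ε)^K - 1) * T * |c K| := by
    have h1 : q0 - S * c K = ∑ j ∈ Finset.range (K+1), γ j * (c j - c K) := by
      rw [hq0def, hSdef, Finset.sum_mul, ← Finset.sum_sub_distrib]
      exact Finset.sum_congr rfl fun j _ => by ring
    rw [h1]
    calc |∑ j ∈ Finset.range (K+1), γ j * (c j - c K)|
        ≤ ∑ j ∈ Finset.range (K+1), |γ j * (c j - c K)| :=
          Finset.abs_sum_le_sum_abs _ _
    _ = ∑ j ∈ Finset.range (K+1), |γ j| * |c j - c K| := by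
          exact Finset.sum_congr rfl fun j _ => abs_mul _ _
    _ = ∑ j ∈ Finset.range K, |γ j| * |c j - c K| := by
          rw [Finset.sum_range_succ]; simp
    _ ≤ ∑ j ∈ Finset.range K, |γ j| * (((1+ε)^K - 1) * |c K|) := by
          refine Finset.sum_le_sum fun j hj => ?_
          exact mul_le_mul_of_nonneg_left
            (hcb j (Finset.mem_range.mpr (by simp at hj; omega))) (abs_nonneg _)
    _ = ((1+ε)^K - 1) * T * |c K| := by
          rw [← Finset.sum_mul, ← hTdef]; ring
  have hone : (1:ℝ) ≤ (1+ε)^K := one_le_pow₀ (by linarith)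
  have hstrict : ((1+ε)^K - 1) * T < |S| := by
    have hT0 : (0:ℝ) < T := by linarith
    calc ((1+ε)^K - 1) * T < (1/M) * T :=
      mul_lt_mul_of_pos_right key hT0
    _ ≤ |S| := by
        rw [one_div, inv_mul_le_iff₀ hM0]
        linarith
  have hcK : |c K| = c K := abs_of_pos (hc_pos K)
  have hqS : |q0 - S * c K| < |S| * c K := by
    rw [hcK] at herr
    calc |q0 - S * c K| ≤ ((1+ε)^K - 1) * T * c K := herr
    _ < |S| * c K := mul_lt_mul_of_pos_right hstrict (hc_pos K)
  obtain ⟨hlo, hhi⟩ := abs_lt.mp hqS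
  rw [hq]
  rcases lt_trichotomy S 0 with h | h | h
  · rw [abs_of_neg h] at hhi
    have hq0 : q0 < 0 := by linarith
    rw [Real.sign_of_neg hq0, Real.sign_of_neg h]
  · exact absurd h hP1
  · rw [abs_of_pos h] at hlo
    have hq0 : 0 < q0 := by linarith
    rw [Real.sign_of_pos hq0, Real.sign_of_pos h]
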